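/- Let E be a real inner product space, ℓ : E → ℝ, v : E → ℝ → E, η : ℝ → ℝ, and let x : ℝ → E solve the logic-adjusted ODE at time t (x has derivative v(x(t), t) − η(t) • g at t, where ℓ has gradient g at x(t)). If ℓ(x(t)) > 0 implies g ≠ 0 and η(t) ≥ ⟪g, v(x(t), t)⟫ / ‖g‖², then whenever ℓ(x(t)) > 0 the derivative of s ↦ ℓ(x(s)) at t is ≤ 0. (Proposition A.2: sufficient condition for monotone violation decrease.) -/

import Mathlib

open RealInnerProductSpace

/-- Proposition A.2 (sufficient condition for monotone violation decrease):
under the logic-adjusted dynamics, if `η t ≥ ⟪g, v (x t) t⟫ / ‖g‖²` (and `g ≠ 0`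
whenever the violation is positive), then whenever `ℓ (x t) > 0` the derivative
of `s ↦ ℓ (x s)` at `t` is nonpositive. -/
theorem prop_monotone_decrease
    {E : Type*} [NormedAddCommGroup E] [InnerProductSpace ℝ E] [CompleteSpace E]
    (ℓ : E → ℝ) (v : E → ℝ → E) (η : ℝ → ℝ) (x : ℝ → E) (t : ℝ) (g : E)
    (hg : HasGradientAt ℓ g (x t))
    (hx : HasDerivAt x (v (x t) t - η t • g) t)
    (hne : 0 < ℓ (x t) → g ≠ 0)
    (hη : η t ≥ ⟪g, v (x t) t⟫ / ‖g‖ ^ 2)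
    (hpos : 0 < ℓ (x t)) :
    deriv (fun s => ℓ (x s)) t ≤ 0 := by
  have hcomp : HasDerivAt (fun s => ℓ (x s)) ⟪g, v (x t) t - η t • g⟫ t := by
    have := hg.hasFDerivAt.comp_hasDerivAt t hx
    simp [real_inner_comm] at this
    exact this
  rw [hcomp.deriv]
  have hg0 : g ≠ 0 := hne hpos
  have hn : (0:ℝ) < ‖g‖ ^ 2 := by have := norm_pos_iff.mpr hg0; positivity
  have : ⟪g, v (x t) t⟫ ≤ η t * ‖g‖ ^ 2 := by
    rw [ge_iff_le, div_le_iff₀ hn] at hη; linarith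
  rw [inner_sub_right, real_inner_smul_right, real_inner_self_eq_norm_sq]
  linarith
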